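/- Let B, B' be i.i.d. nonnegative random variables with regularly varying tail of index −κ (κ > 0), and let M, M' be nonnegative random variables independent of (B, B') with E[M^{κ+δ}] + E[M'^{κ+δ}] < ∞ for some δ > 0. Then P(M B > x, M' B' > x) = o(P(B > x)) as x → ∞. -/

import Mathlib

open MeasureTheory ProbabilityTheory Filter
open scoped ProbabilityTheory Topology

lemma dyadic_core {G : ℝ → ℝ} {q x0 : ℝ} (hq : 0 ≤ q) (hx0 : 1 ≤ x0)
    (h : ∀ x, x0 ≤ x → G (2 * x) ≤ q * G x) :
    ∀ n : ℕ, G (x0 * 2 ^ n) ≤ q ^ n * G x0 := by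
  intro n
  induction n with
  | zero => simp
  | succ n ih =>
    have h2n : (1:ℝ) ≤ 2 ^ n := one_le_pow₀ (by norm_num)
    have h1 : x0 ≤ x0 * 2 ^ n := le_mul_of_one_le_right (by linarith) h2n
    calc G (x0 * 2 ^ (n + 1)) = G (2 * (x0 * 2 ^ n)) := by ring_nf
      _ ≤ q * G (x0 * 2 ^ n) := h _ h1
      _ ≤ q * (q ^ n * G x0) := mul_le_mul_of_nonneg_left ih hq
      _ = q ^ (n + 1) * G x0 := by ring

lemma exists_dyadic {x0 x : ℝ} (hx0 : 1 ≤ x0) (hx : x0 ≤ x) :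
    ∃ n : ℕ, x0 * 2 ^ n ≤ x ∧ x < x0 * 2 ^ (n + 1) := by
  have hx0' : 0 < x0 := by linarith
  have hr : 1 ≤ x / x0 := (one_le_div hx0').2 hx
  set m := ⌊x / x0⌋₊ with hm
  have hm1 : 1 ≤ m := Nat.le_floor (by exact_mod_cast hr)
  refine ⟨Nat.log 2 m, ?_, ?_⟩
  · have h2 : (2:ℝ) ^ (Nat.log 2 m) ≤ (m : ℝ) := by
      exact_mod_cast Nat.pow_log_le_self 2 (by omega)
    have h3 : (m : ℝ) ≤ x / x0 := Nat.floor_le (by positivity)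
    have : x0 * (2:ℝ) ^ (Nat.log 2 m) ≤ x0 * m := by nlinarith
    calc x0 * (2:ℝ) ^ (Nat.log 2 m) ≤ x0 * m := this
      _ ≤ x0 * (x / x0) := by nlinarith
      _ = x := by field_simp
  · have h4 : (m : ℝ) + 1 ≤ (2:ℝ) ^ (Nat.log 2 m + 1) := by
      have := Nat.lt_pow_succ_log_self (by norm_num : 1 < 2) m
      exact_mod_cast Nat.succ_le_of_lt this
    have h5 : x / x0 < (m : ℝ) + 1 := Nat.lt_floor_add_one _
    have : x < x0 * ((m:ℝ) + 1) := by
      rw [div_lt_iff₀ hx0'] at h5; nlinarith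
    calc x < x0 * ((m:ℝ) + 1) := this
      _ ≤ x0 * (2:ℝ) ^ (Nat.log 2 m + 1) := by nlinarith

lemma tail_upper {G : ℝ → ℝ} {κ ε : ℝ} (hκ : 0 < κ) (hε : 0 < ε) (hεκ : ε < κ)
    (hmono : Antitone G) (hpos : ∀ x, 0 < G x) (hle1 : ∀ x, G x ≤ 1)
    (hratio : Tendsto (fun x => G (2 * x) / G x) atTop (𝓝 ((2:ℝ) ^ (-κ)))) :
    ∀ᶠ x in atTop, G x ≤ x ^ (-(κ - ε)) := by
  set β := κ - ε / 2 with hβ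
  have hβpos : 0 < β := by simp only [hβ]; linarith
  set q := (2:ℝ) ^ (-β) with hq
  have hqpos : 0 < q := Real.rpow_pos_of_pos two_pos _
  have hlt : (2:ℝ) ^ (-κ) < q := by
    rw [hq]
    apply (Real.rpow_lt_rpow_left_iff one_lt_two).2
    simp only [hβ]; linarith
  have hev : ∀ᶠ x in atTop, G (2 * x) ≤ q * G x := by
    filter_upwards [hratio.eventually_lt_const hlt] with x hx
    exact le_of_lt ((div_lt_iff₀ (hpos x)).1 hx)
  obtain ⟨x1, hx1⟩ := eventually_atTop.1 hev
  set x0 := max x1 1 with hx0def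
  have hx01 : 1 ≤ x0 := le_max_right _ _
  have hcore := dyadic_core hqpos.le hx01
    (fun x hx => hx1 x (le_trans (le_max_left _ _) hx))
  have key : ∀ x, x0 ≤ x → G x ≤ (2 * x0) ^ β * x ^ (-β) := by
    intro x hx
    obtain ⟨n, hn1, hn2⟩ := exists_dyadic hx01 hx
    have hxpos : (0:ℝ) < x := by
      have : (0:ℝ) < x0 * 2 ^ n := by positivity
      linarith
    have hqn : (0:ℝ) ≤ q ^ n := pow_nonneg hqpos.le n
    have hG : G x ≤ q ^ n := by
      have := hmono hn1
      have h2 := hcore n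
      nlinarith [hle1 x0, (hpos x0).le]
    have hq2 : q ^ n = ((2:ℝ) ^ (n:ℝ)) ^ (-β) := by
      rw [hq, ← Real.rpow_natCast ((2:ℝ) ^ (-β)) n, ← Real.rpow_mul (by norm_num),
        ← Real.rpow_mul (by norm_num)]
      ring_nf
    have h2nr : (2:ℝ) ^ (n:ℝ) = (2:ℝ) ^ n := Real.rpow_natCast 2 n
    have hdivpos : 0 < x / (2 * x0) := by positivity
    have h2n : x / (2 * x0) ≤ (2:ℝ) ^ (n:ℝ) := by
      rw [h2nr, div_le_iff₀ (by positivity)]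
      have hps : (2:ℝ) ^ (n+1) = 2 ^ n * 2 := pow_succ 2 n
      nlinarith
    have hstep : ((2:ℝ) ^ (n:ℝ)) ^ (-β) ≤ (x / (2 * x0)) ^ (-β) :=
      Real.rpow_le_rpow_of_nonpos hdivpos h2n (by linarith)
    have hsplit : (x / (2 * x0)) ^ (-β) = (2 * x0) ^ β * x ^ (-β) := by
      rw [Real.div_rpow hxpos.le (by positivity), Real.rpow_neg (by positivity : (0:ℝ) ≤ 2 * x0)]
      field_simp
    calc G x ≤ q ^ n := hG
      _ = ((2:ℝ) ^ (n:ℝ)) ^ (-β) := hq2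
      _ ≤ (x / (2 * x0)) ^ (-β) := hstep
      _ = (2 * x0) ^ β * x ^ (-β) := hsplit
  have hev2 : ∀ᶠ x in atTop, (2 * x0) ^ β ≤ x ^ (ε / 2) :=
    (tendsto_rpow_atTop (by linarith : (0:ℝ) < ε / 2)).eventually_ge_atTop _
  filter_upwards [eventually_ge_atTop x0, hev2, eventually_gt_atTop 0] with x hx h2 hx0'
  calc G x ≤ (2 * x0) ^ β * x ^ (-β) := key x hx
    _ ≤ x ^ (ε / 2) * x ^ (-β) := by
        exact mul_le_mul_of_nonneg_right h2 (Real.rpow_nonneg hx0'.le _)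
    _ = x ^ (-(κ - ε)) := by
        rw [← Real.rpow_add hx0']
        congr 1
        simp only [hβ]; ring

lemma tail_lower {G : ℝ → ℝ} {κ ε : ℝ} (hκ : 0 < κ) (hε : 0 < ε)
    (hmono : Antitone G) (hpos : ∀ x, 0 < G x)
    (hratio : Tendsto (fun x => G (2 * x) / G x) atTop (𝓝 ((2:ℝ) ^ (-κ)))) :
    ∀ᶠ x in atTop, x ^ (-(κ + ε)) ≤ G x := by
  set β := κ + ε / 2 with hβ
  have hβpos : 0 < β := by simp only [hβ]; linarith
  set q := (2:ℝ) ^ (-β) with hq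
  have hqpos : 0 < q := Real.rpow_pos_of_pos two_pos _
  have hlt : q < (2:ℝ) ^ (-κ) := by
    rw [hq]
    apply (Real.rpow_lt_rpow_left_iff one_lt_two).2
    simp only [hβ]; linarith
  have hev : ∀ᶠ x in atTop, (fun y => -G y) (2 * x) ≤ q * (fun y => -G y) x := by
    filter_upwards [hratio.eventually_const_lt hlt] with x hx
    have := (lt_div_iff₀ (hpos x)).1 hx
    show -G (2 * x) ≤ q * -G x
    linarith
  obtain ⟨x1, hx1⟩ := eventually_atTop.1 hev
  set x0 := max x1 1 with hx0def
  have hx01 : 1 ≤ x0 := le_max_right _ _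
  have hx0pos : (0:ℝ) < x0 := by linarith
  have hcore := dyadic_core (G := fun y => -G y) hqpos.le hx01
    (fun x hx => hx1 x (le_trans (le_max_left _ _) hx))
  have hcore' : ∀ n : ℕ, q ^ n * G x0 ≤ G (x0 * 2 ^ n) := by
    intro n
    have := hcore n
    linarith
  have key : ∀ x, x0 ≤ x → q * G x0 * x ^ (-β) ≤ G x := by
    intro x hx
    obtain ⟨n, hn1, hn2⟩ := exists_dyadic hx01 hx
    have hxpos : (0:ℝ) < x := by
      have : (0:ℝ) < x0 * 2 ^ n := by positivity
      linarith
    have hG : q ^ (n + 1) * G x0 ≤ G x := by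
      have h1 := hcore' (n + 1)
      have h2 := hmono hn2.le
      linarith
    have hq2 : q ^ n = ((2:ℝ) ^ (n:ℝ)) ^ (-β) := by
      rw [hq, ← Real.rpow_natCast ((2:ℝ) ^ (-β)) n, ← Real.rpow_mul (by norm_num),
        ← Real.rpow_mul (by norm_num)]
      ring_nf
    have h2nr : (2:ℝ) ^ (n:ℝ) = (2:ℝ) ^ n := Real.rpow_natCast 2 n
    have h2n : (2:ℝ) ^ (n:ℝ) ≤ x / x0 := by
      rw [h2nr, le_div_iff₀ hx0pos]
      nlinarith
    have hstep : (x / x0) ^ (-β) ≤ ((2:ℝ) ^ (n:ℝ)) ^ (-β) :=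
      Real.rpow_le_rpow_of_nonpos (by positivity) h2n (by linarith)
    have hsplit : (x / x0) ^ (-β) = x0 ^ β * x ^ (-β) := by
      rw [Real.div_rpow hxpos.le hx0pos.le, Real.rpow_neg hx0pos.le]
      field_simp
    have hx0β : (1:ℝ) ≤ x0 ^ β := Real.one_le_rpow hx01 hβpos.le
    have hxβ : (0:ℝ) ≤ x ^ (-β) := Real.rpow_nonneg hxpos.le _
    have hqn : x ^ (-β) ≤ q ^ n := by
      rw [hq2]
      calc x ^ (-β) ≤ x0 ^ β * x ^ (-β) := le_mul_of_one_le_left hxβ hx0β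
        _ = (x / x0) ^ (-β) := hsplit.symm
        _ ≤ ((2:ℝ) ^ (n:ℝ)) ^ (-β) := hstep
    have hGx0 : 0 < G x0 := hpos x0
    calc q * G x0 * x ^ (-β) ≤ q * G x0 * q ^ n :=
        mul_le_mul_of_nonneg_left hqn (mul_pos hqpos hGx0).le
      _ = q ^ (n + 1) * G x0 := by ring
      _ ≤ G x := hG
  have hc : (0:ℝ) < q * G x0 := mul_pos hqpos (hpos x0)
  have hev2 : ∀ᶠ x : ℝ in atTop, x ^ (-(ε / 2)) ≤ q * G x0 :=
    ((tendsto_rpow_neg_atTop (by linarith : (0:ℝ) < ε / 2)).eventually_lt_const hc).mono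
      fun x hx => hx.le
  filter_upwards [eventually_ge_atTop x0, hev2, eventually_gt_atTop 0] with x hx h2 hx0'
  have hxβ : (0:ℝ) ≤ x ^ (-β) := Real.rpow_nonneg hx0'.le _
  calc x ^ (-(κ + ε)) = x ^ (-(ε / 2)) * x ^ (-β) := by
        rw [← Real.rpow_add hx0']
        congr 1
        simp only [hβ]; ring
    _ ≤ (q * G x0) * x ^ (-β) := mul_le_mul_of_nonneg_right h2 hxβ
    _ ≤ G x := key x hx

lemma meas_aux (p : Prop) (c : ℝ) : MeasurableSet {y : ℝ | p ∨ c < y} := by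
  by_cases hp : p
  · simp only [hp, true_or, Set.setOf_true]
    exact MeasurableSet.univ
  · simp only [hp, false_or]
    exact measurableSet_Ioi

lemma markov_tail {Ω : Type*} [MeasureSpace Ω] [IsProbabilityMeasure (ℙ : Measure Ω)]
    {K : Ω → ℝ} {p : ℝ} (hKnn : ∀ ω, 0 ≤ K ω) (hp : 0 < p)
    (hint : Integrable (fun ω => K ω ^ p)) {y : ℝ} (hy : 0 < y) :
    (ℙ {ω | y < K ω}).toReal ≤ (∫ ω, K ω ^ p) / y ^ p := by
  have hsub : {ω | y < K ω} ⊆ {ω | y ^ p ≤ (fun ω => K ω ^ p) ω} := fun ω hω =>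
    Real.rpow_le_rpow hy.le (le_of_lt hω) hp.le
  have h1 : (ℙ {ω | y < K ω}).toReal ≤ (ℙ {ω | y ^ p ≤ (fun ω => K ω ^ p) ω}).toReal :=
    ENNReal.toReal_mono (measure_ne_top _ _) (measure_mono hsub)
  have h2 := mul_meas_ge_le_integral_of_nonneg
    (ae_of_all _ fun ω => Real.rpow_nonneg (hKnn ω) p) hint (y ^ p)
  have hyp : 0 < y ^ p := Real.rpow_pos_of_pos hy p
  rw [le_div_iff₀ hyp]
  have h4 : y ^ p * (ℙ {ω | y ^ p ≤ (fun ω => K ω ^ p) ω}).toReal ≤ ∫ ω, K ω ^ p := h2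
  nlinarith [ENNReal.toReal_nonneg (a := ℙ {ω | y < K ω}), mul_le_mul_of_nonneg_left h1 hyp.le, h4]

lemma term_lemma {Ω : Type*} [MeasureSpace Ω] [IsProbabilityMeasure (ℙ : Measure Ω)]
    (B B' K : Ω → ℝ)
    (hKnn : ∀ ω, 0 ≤ K ω)
    (hBB'ind : IndepFun B B')
    (hBB'id : IdentDistrib B' B ℙ ℙ)
    (κ δ : ℝ) (hκ : 0 < κ) (hδ : 0 < δ)
    (hBpos : ∀ x : ℝ, 0 < (ℙ {ω | x < B ω}).toReal)
    (hBreg2 : Tendsto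
      (fun x => (ℙ {ω | 2 * x < B ω}).toReal / (ℙ {ω | x < B ω}).toReal)
      atTop (𝓝 ((2:ℝ) ^ (-κ))))
    (hKind : IndepFun K (fun ω => (B ω, B' ω)))
    (hKmom : Integrable (fun ω => K ω ^ (κ + δ)))
    (σ u u' : ℝ) (hσ : 0 ≤ σ) (hu0 : 0 ≤ u) (hu : u ≤ 1) (hu'0 : 0 ≤ u') (hu' : u' ≤ 1)
    (hslack : κ < σ * (κ + δ) + (1 - u) * κ + (1 - u') * κ) :
    Tendsto (fun x => (ℙ {ω | (σ = 0 ∨ x ^ σ < K ω) ∧ (u = 1 ∨ x ^ (1 - u) < B ω)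
        ∧ (u' = 1 ∨ x ^ (1 - u') < B' ω)}).toReal / (ℙ {ω | x < B ω}).toReal)
      atTop (𝓝 0) := by
  have hκδ : 0 < κ + δ := by linarith
  set F : ℝ → ℝ := fun y => (ℙ {ω | y < B ω}).toReal with hF
  have Fmono : Antitone F := fun a b hab =>
    ENNReal.toReal_mono (measure_ne_top _ _)
      (measure_mono fun ω hω => lt_of_le_of_lt hab hω)
  have Fle1 : ∀ y, F y ≤ 1 := by
    intro y
    have := prob_le_one (μ := (ℙ : Measure Ω)) (s := {ω | y < B ω})
    simpa using ENNReal.toReal_mono ENNReal.one_ne_top this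
  -- choose ε
  set s : ℝ := σ * (κ + δ) + (1 - u) * κ + (1 - u') * κ - κ with hs_def
  have hs : 0 < s := by simp only [hs_def]; linarith
  set ε : ℝ := min (s / 4) (κ / 2) with hε_def
  have hε : 0 < ε := lt_min (by linarith) (by linarith)
  have hεκ : ε < κ := lt_of_le_of_lt (min_le_right _ _) (by linarith)
  set η : ℝ := σ * (κ + δ) + (1 - u) * (κ - ε) + (1 - u') * (κ - ε) - (κ + ε) with hη_def
  have hη : 0 < η := by
    have h1 : ε ≤ s / 4 := min_le_left _ _
    have h2 : (1 - u) ≤ 1 := by linarith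
    have h3 : (1 - u') ≤ 1 := by linarith
    have h4 : 0 ≤ (1 - u) := by linarith
    have h5 : 0 ≤ (1 - u') := by linarith
    have : η = s - ε * ((1 - u) + (1 - u') + 1) := by simp only [hη_def, hs_def]; ring
    rw [this]
    nlinarith
  set CK : ℝ := ∫ ω, K ω ^ (κ + δ) with hCK_def
  have hCK : 0 ≤ CK := integral_nonneg fun ω => Real.rpow_nonneg (hKnn ω) _
  -- factorization
  have hfact : ∀ x : ℝ,
      (ℙ {ω | (σ = 0 ∨ x ^ σ < K ω) ∧ (u = 1 ∨ x ^ (1 - u) < B ω)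
        ∧ (u' = 1 ∨ x ^ (1 - u') < B' ω)}).toReal
      = (ℙ {ω | σ = 0 ∨ x ^ σ < K ω}).toReal *
        ((ℙ {ω | u = 1 ∨ x ^ (1 - u) < B ω}).toReal *
         (ℙ {ω | u' = 1 ∨ x ^ (1 - u') < B' ω}).toReal) := by
    intro x
    have mS : MeasurableSet {y : ℝ | σ = 0 ∨ x ^ σ < y} := meas_aux _ _
    have mT : MeasurableSet {y : ℝ | u = 1 ∨ x ^ (1 - u) < y} := meas_aux _ _
    have mT' : MeasurableSet {y : ℝ | u' = 1 ∨ x ^ (1 - u') < y} := meas_aux _ _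
    have e1 : {ω | (σ = 0 ∨ x ^ σ < K ω) ∧ (u = 1 ∨ x ^ (1 - u) < B ω)
        ∧ (u' = 1 ∨ x ^ (1 - u') < B' ω)}
        = K ⁻¹' {y | σ = 0 ∨ x ^ σ < y} ∩ (fun ω => (B ω, B' ω)) ⁻¹'
          ({y | u = 1 ∨ x ^ (1 - u) < y} ×ˢ {y | u' = 1 ∨ x ^ (1 - u') < y}) := by
      ext ω
      simp [Set.mem_prod]
    have e2 : (fun ω => (B ω, B' ω)) ⁻¹'
          ({y | u = 1 ∨ x ^ (1 - u) < y} ×ˢ {y | u' = 1 ∨ x ^ (1 - u') < y})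
        = B ⁻¹' {y | u = 1 ∨ x ^ (1 - u) < y} ∩ B' ⁻¹' {y | u' = 1 ∨ x ^ (1 - u') < y} := by
      ext ω; simp [Set.mem_prod]
    rw [e1, hKind.measure_inter_preimage_eq_mul _ _ mS (mT.prod mT'), e2,
      hBB'ind.measure_inter_preimage_eq_mul _ _ mT mT', ENNReal.toReal_mul, ENNReal.toReal_mul]
    rfl
  -- bound on the K factor
  have hb1 : ∀ x : ℝ, 1 ≤ x →
      (ℙ {ω | σ = 0 ∨ x ^ σ < K ω}).toReal ≤ (CK + 1) * x ^ (-(σ * (κ + δ))) := by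
    intro x hx
    have hx0 : (0:ℝ) < x := by linarith
    rcases eq_or_lt_of_le hσ with h0 | h0
    · have : {ω : Ω | σ = 0 ∨ x ^ σ < K ω} = Set.univ := by
        ext ω; simp [← h0]
      rw [this, ← h0]
      simp [Real.rpow_zero]
      linarith
    · have hem : {ω : Ω | σ = 0 ∨ x ^ σ < K ω} = {ω | x ^ σ < K ω} := by
        ext ω; simp [h0.ne']
      rw [hem]
      have hm := markov_tail hKnn hκδ hKmom (Real.rpow_pos_of_pos hx0 σ)
      have heq : ((x:ℝ) ^ σ) ^ (κ + δ) = x ^ (σ * (κ + δ)) := (Real.rpow_mul hx0.le σ (κ + δ)).symm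
      have hrpos : (0:ℝ) < x ^ (σ * (κ + δ)) := Real.rpow_pos_of_pos hx0 _
      calc (ℙ {ω | x ^ σ < K ω}).toReal ≤ CK / (x ^ σ) ^ (κ + δ) := hm
        _ = CK * x ^ (-(σ * (κ + δ))) := by
            rw [heq, Real.rpow_neg hx0.le, div_eq_mul_inv]
        _ ≤ (CK + 1) * x ^ (-(σ * (κ + δ))) := by
            have : (0:ℝ) ≤ x ^ (-(σ * (κ + δ))) := Real.rpow_nonneg hx0.le _
            nlinarith
  -- bound on the B factor
  have hupB := tail_upper hκ hε hεκ Fmono hBpos Fle1 hBreg2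
  have hb2gen : ∀ v : ℝ, 0 ≤ v → ∀ᶠ x : ℝ in atTop,
      F (x ^ v) ≤ x ^ (-(v * (κ - ε))) := by
    intro v hv
    rcases eq_or_lt_of_le hv with h0 | h0
    · filter_upwards [eventually_gt_atTop 0] with x hx
      rw [← h0, Real.rpow_zero, zero_mul, neg_zero, Real.rpow_zero]
      exact Fle1 1
    · filter_upwards [(tendsto_rpow_atTop h0).eventually hupB, eventually_gt_atTop 0]
        with x hx hx0
      calc F (x ^ v) ≤ (x ^ v) ^ (-(κ - ε)) := hx
        _ = x ^ (-(v * (κ - ε))) := by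
            rw [← Real.rpow_mul hx0.le]
            congr 1; ring
  have hb2 : ∀ᶠ x : ℝ in atTop,
      (ℙ {ω | u = 1 ∨ x ^ (1 - u) < B ω}).toReal ≤ x ^ (-((1 - u) * (κ - ε))) := by
    by_cases hu1 : u = 1
    · filter_upwards [eventually_gt_atTop 0] with x hx
      have : {ω : Ω | u = 1 ∨ x ^ (1 - u) < B ω} = Set.univ := by ext ω; simp [hu1]
      rw [this, hu1]
      simp [Real.rpow_zero]
    · have hv : 0 ≤ 1 - u := by linarith
      filter_upwards [hb2gen (1 - u) hv] with x hx
      have : {ω : Ω | u = 1 ∨ x ^ (1 - u) < B ω} = {ω | x ^ (1 - u) < B ω} := by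
        ext ω; simp [hu1]
      rw [this]
      exact hx
  have hB'eq : ∀ c : ℝ, ℙ {ω | c < B' ω} = ℙ {ω | c < B ω} := fun c =>
    hBB'id.measure_mem_eq (measurableSet_Ioi (a := c))
  have hb3 : ∀ᶠ x : ℝ in atTop,
      (ℙ {ω | u' = 1 ∨ x ^ (1 - u') < B' ω}).toReal ≤ x ^ (-((1 - u') * (κ - ε))) := by
    by_cases hu1 : u' = 1
    · filter_upwards [eventually_gt_atTop 0] with x hx
      have : {ω : Ω | u' = 1 ∨ x ^ (1 - u') < B' ω} = Set.univ := by ext ω; simp [hu1]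
      rw [this, hu1]
      simp [Real.rpow_zero]
    · have hv : 0 ≤ 1 - u' := by linarith
      filter_upwards [hb2gen (1 - u') hv] with x hx
      have : {ω : Ω | u' = 1 ∨ x ^ (1 - u') < B' ω} = {ω | x ^ (1 - u') < B' ω} := by
        ext ω; simp [hu1]
      rw [this, hB'eq]
      exact hx
  have hlow := tail_lower hκ hε Fmono hBpos hBreg2
  -- squeeze
  apply squeeze_zero' (g := fun x => (CK + 1) * x ^ (-η))
  · exact Eventually.of_forall fun x => div_nonneg ENNReal.toReal_nonneg ENNReal.toReal_nonneg
  · filter_upwards [hb2, hb3, hlow, eventually_ge_atTop 1] with x h2 h3 hlo hx1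
    have hx0 : (0:ℝ) < x := by linarith
    have hFx : 0 < F x := hBpos x
    have hinv : (F x)⁻¹ ≤ x ^ (κ + ε) := by
      have h1 : 0 < x ^ (-(κ + ε)) := Real.rpow_pos_of_pos hx0 _
      have h2' : (F x)⁻¹ ≤ (x ^ (-(κ + ε)))⁻¹ := by
        apply inv_anti₀ h1 hlo
      rwa [← Real.rpow_neg hx0.le, neg_neg] at h2'
    rw [hfact x, div_eq_mul_inv]
    have e : ((CK + 1) * x ^ (-(σ * (κ + δ)))) *
          (x ^ (-((1 - u) * (κ - ε))) * x ^ (-((1 - u') * (κ - ε)))) * x ^ (κ + ε)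
        = (CK + 1) * x ^ (-η) := by
      simp only [mul_assoc, ← Real.rpow_add hx0]
      congr 2
      simp only [hη_def]; ring
    rw [← e]
    gcongr <;> first
      | exact hb1 x hx1 | exact h2 | exact h3 | exact hinv
  · have := (tendsto_rpow_neg_atTop hη).const_mul (CK + 1)
    simpa using this

set_option maxHeartbeats 1600000 in
theorem stmt19 {Ω : Type*} [MeasureSpace Ω] [IsProbabilityMeasure (ℙ : Measure Ω)]
    (B B' M M' : Ω → ℝ)
    (hBmeas : Measurable B) (hB'meas : Measurable B')
    (hMmeas : Measurable M) (hM'meas : Measurable M')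
    (hBnn : ∀ ω, 0 ≤ B ω) (hB'nn : ∀ ω, 0 ≤ B' ω)
    (hMnn : ∀ ω, 0 ≤ M ω) (hM'nn : ∀ ω, 0 ≤ M' ω)
    (hBB'ind : IndepFun B B')
    (hBB'id : IdentDistrib B' B ℙ ℙ)
    (κ δ : ℝ) (hκ : 0 < κ) (hδ : 0 < δ)
    (hBpos : ∀ x : ℝ, 0 < (ℙ {ω | x < B ω}).toReal)
    (hBreg : ∀ t > (0 : ℝ),
      Tendsto (fun x => (ℙ {ω | t * x < B ω}).toReal / (ℙ {ω | x < B ω}).toReal)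
        atTop (𝓝 (t ^ (-κ))))
    (hind : IndepFun (fun ω => (M ω, M' ω)) (fun ω => (B ω, B' ω)))
    (hMmom : Integrable (fun ω => M ω ^ (κ + δ)))
    (hM'mom : Integrable (fun ω => M' ω ^ (κ + δ))) :
    Tendsto (fun x => (ℙ {ω | x < M ω * B ω ∧ x < M' ω * B' ω}).toReal /
      (ℙ {ω | x < B ω}).toReal) atTop (𝓝 0) := by
  classical
  have hκδ : 0 < κ + δ := by linarith
  -- parameters
  set a : ℝ := (κ / (κ + δ) + 1) / 2 with ha_def
  have hfrac1 : κ / (κ + δ) < 1 := (div_lt_one hκδ).2 (by linarith)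
  have hfrac0 : 0 < κ / (κ + δ) := by positivity
  have ha1 : a < 1 := by simp only [ha_def]; linarith
  have ha0 : 0 < a := by simp only [ha_def]; linarith
  have haκ : κ < a * (κ + δ) := by
    have h1 : κ / (κ + δ) < a := by simp only [ha_def]; linarith
    calc κ = κ / (κ + δ) * (κ + δ) := by field_simp
      _ < a * (κ + δ) := mul_lt_mul_of_pos_right h1 hκδ
  set N : ℕ := ⌈(κ + δ) / δ⌉₊ + 2 with hN_def
  have hNR : (κ + δ) / δ ≤ (N : ℝ) := by
    have := Nat.le_ceil ((κ + δ) / δ)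
    have h2 : ((⌈(κ + δ) / δ⌉₊ : ℝ)) ≤ (N : ℝ) := by
      simp only [hN_def]; push_cast; linarith
    linarith
  have hN2 : (2 : ℝ) ≤ (N : ℝ) := by simp only [hN_def]; push_cast; linarith [Nat.cast_nonneg (α := ℝ) ⌈(κ + δ) / δ⌉₊]
  have hN0 : (0 : ℝ) < (N : ℝ) := by linarith
  set h : ℝ := a / N with hh_def
  have hhpos : 0 < h := by positivity
  have hNh : (N : ℝ) * h = a := by rw [hh_def]; field_simp [hN0.ne']
  have hhalf : h < 1 / 2 := by
    have : h ≤ a / 2 := by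
      rw [hh_def]
      apply div_le_div_of_nonneg_left ha0.le (by norm_num) hN2
    linarith
  have hhδ : h * (κ + δ) < δ := by
    have h1 : κ + δ ≤ δ * N := by
      rw [div_le_iff₀ hδ] at hNR; linarith
    have h2 : h < 1 / (N : ℝ) := by
      rw [hh_def, div_lt_div_iff₀ hN0 hN0]
      nlinarith
    have h3 : (1 / (N : ℝ)) * (κ + δ) ≤ δ := by
      rw [div_mul_eq_mul_div, div_le_iff₀ hN0]
      nlinarith
    nlinarith
  clear_value a N h
  -- grid functions
  set U : ℕ → ℝ := fun i => if i = N then 1 else ((i : ℝ) + 1) * h with hU_def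
  clear_value U
  have hU_le : ∀ j, j ≤ N → U j ≤ 1 := by
    intro j hj
    by_cases hjN : j = N
    · simp [hU_def, hjN]
    · have hjN' : j < N := lt_of_le_of_ne hj hjN
      have hc : (j : ℝ) + 1 ≤ (N : ℝ) := by exact_mod_cast Nat.succ_le_of_lt hjN'
      simp only [hU_def, if_neg hjN]
      calc ((j : ℝ) + 1) * h ≤ (N : ℝ) * h := mul_le_mul_of_nonneg_right hc hhpos.le
        _ = a := hNh
        _ ≤ 1 := ha1.le
  have hU0 : ∀ j, 0 ≤ U j := by
    intro j
    by_cases hjN : j = N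
    · simp [hU_def, hjN]
    · simp only [hU_def, if_neg hjN]
      positivity
  -- slack arithmetic
  have slack_aux : ∀ i j : ℕ, j ≤ i → i ≤ N →
      κ < (i : ℝ) * h * (κ + δ) + (1 - U i) * κ + (1 - U j) * κ := by
    intro i j hji hiN
    have hjN : j ≤ N := le_trans hji hiN
    by_cases hiNeq : i = N
    · have hUj : U j ≤ 1 := hU_le j hjN
      have h1 : 0 ≤ (1 - U j) * κ := mul_nonneg (by linarith) hκ.le
      have h2 : (i : ℝ) * h = a := by rw [hiNeq]; exact hNh
      have hUi : U i = 1 := by rw [hU_def]; simp [hiNeq]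
      rw [hUi, h2]
      linarith
    · have hiN' : i < N := lt_of_le_of_ne hiN hiNeq
      have hjN' : j < N := lt_of_le_of_lt hji hiN'
      simp only [hU_def, if_neg hiNeq, if_neg (Nat.ne_of_lt hjN')]
      have hij : (j : ℝ) ≤ (i : ℝ) := by exact_mod_cast hji
      have hih : (i : ℝ) * h ≤ a - h := by
        have hc : (i : ℝ) + 1 ≤ (N : ℝ) := by exact_mod_cast Nat.succ_le_of_lt hiN'
        have h4 : ((i : ℝ) + 1) * h ≤ (N : ℝ) * h := mul_le_mul_of_nonneg_right hc hhpos.le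
        rw [hNh] at h4
        nlinarith
      have hjh : (j : ℝ) * h * κ ≤ (i : ℝ) * h * κ :=
        mul_le_mul_of_nonneg_right (mul_le_mul_of_nonneg_right hij hhpos.le) hκ.le
      -- goal: κ < i h (κ+δ) + (1 - (i+1) h) κ + (1 - (j+1) h) κ
      by_cases hdk : δ < κ
      · have hkey : (i : ℝ) * h * (κ - δ) ≤ (a - h) * (κ - δ) :=
          mul_le_mul_of_nonneg_right hih (by linarith)
        have hkey2 : a * (κ - δ) < 1 * (κ - δ) := mul_lt_mul_of_pos_right ha1 (by linarith)
        linarith [hjh, hkey, hkey2, hhδ]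
      · push_neg at hdk
        have hkey : 0 ≤ (i : ℝ) * h * (δ - κ) :=
          mul_nonneg (mul_nonneg (Nat.cast_nonneg i) hhpos.le) (by linarith)
        have h2κ : h * κ < 1 / 2 * κ := mul_lt_mul_of_pos_right hhalf hκ
        linarith [hjh, hkey, h2κ]
  have slack : ∀ i j : ℕ, i ≤ N → j ≤ N →
      κ < ((max i j : ℕ) : ℝ) * h * (κ + δ) + (1 - U i) * κ + (1 - U j) * κ := by
    intro i j hi hj
    rcases le_total j i with hji | hij
    · rw [max_eq_left hji]
      exact slack_aux i j hji hi
    · rw [max_eq_right hij]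
      have := slack_aux j i hij hj
      linarith
  -- grid data
  set KK : ℕ × ℕ → Ω → ℝ := fun p => if p.2 ≤ p.1 then M else M' with hKK_def
  clear_value KK
  set SG : ℕ × ℕ → ℝ := fun p => ((max p.1 p.2 : ℕ) : ℝ) * h with hSG_def
  clear_value SG
  set A : ℕ × ℕ → ℝ → Set Ω := fun p x =>
    {ω | (SG p = 0 ∨ x ^ SG p < KK p ω) ∧ (U p.1 = 1 ∨ x ^ (1 - U p.1) < B ω)
      ∧ (U p.2 = 1 ∨ x ^ (1 - U p.2) < B' ω)} with hA_def
  clear_value A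
  set SS : Finset (ℕ × ℕ) := Finset.range (N + 1) ×ˢ Finset.range (N + 1) with hSS_def
  clear_value SS
  -- per-term tendsto
  have Tij : ∀ p ∈ SS, Tendsto
      (fun x => (ℙ (A p x)).toReal / (ℙ {ω | x < B ω}).toReal) atTop (𝓝 0) := by
    intro p hp
    obtain ⟨i, j⟩ := p
    rw [hSS_def, Finset.mem_product, Finset.mem_range, Finset.mem_range] at hp
    have hi : i ≤ N := Nat.lt_succ_iff.1 hp.1
    have hj : j ≤ N := Nat.lt_succ_iff.1 hp.2
    have hKnn : ∀ ω, 0 ≤ KK (i, j) ω := by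
      intro ω
      by_cases hji : j ≤ i
      · simp only [hKK_def, if_pos hji]; exact hMnn ω
      · simp only [hKK_def, if_neg hji]; exact hM'nn ω
    have hKind : IndepFun (KK (i, j)) (fun ω => (B ω, B' ω)) ℙ := by
      by_cases hji : j ≤ i
      · have := hind.comp (measurable_fst (α := ℝ) (β := ℝ)) measurable_id
        simp only [hKK_def, if_pos hji]
        exact this
      · have := hind.comp (measurable_snd (α := ℝ) (β := ℝ)) measurable_id
        simp only [hKK_def, if_neg hji]
        exact this
    have hKmom : Integrable (fun ω => KK (i, j) ω ^ (κ + δ)) ℙ := by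
      by_cases hji : j ≤ i
      · simp only [hKK_def, if_pos hji]; exact hMmom
      · simp only [hKK_def, if_neg hji]; exact hM'mom
    have hσ : 0 ≤ SG (i, j) := by
      rw [hSG_def]; positivity
    rw [hA_def]
    exact term_lemma B B' (KK (i, j)) hKnn hBB'ind hBB'id κ δ hκ hδ hBpos
      (hBreg 2 two_pos) hKind hKmom (SG (i, j)) (U i) (U j) hσ (hU0 i) (hU_le i hi)
      (hU0 j) (hU_le j hj) (by rw [hSG_def]; exact slack i j hi hj)
  -- covering
  have hcover : ∀ x : ℝ, 1 < x →
      {ω | x < M ω * B ω ∧ x < M' ω * B' ω} ⊆ ⋃ p ∈ SS, A p x := by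
    intro x hx ω hω
    obtain ⟨h1, h2⟩ := hω
    have hx0 : (0 : ℝ) < x := by linarith
    set P : ℕ → Prop := fun k => x ^ ((k : ℝ) * h) < M ω with hP_def
    set P' : ℕ → Prop := fun k => x ^ ((k : ℝ) * h) < M' ω with hP'_def
    set i := Nat.findGreatest P N with hi_def
    set j := Nat.findGreatest P' N with hj_def
    have hiN : i ≤ N := Nat.findGreatest_le N
    have hjN : j ≤ N := Nat.findGreatest_le N
    -- B bound when i < N
    have hBnd : ∀ (K : Ω → ℝ) (BB : Ω → ℝ) (k : ℕ), (0 ≤ BB ω) → (x < K ω * BB ω) →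
        ¬ (x ^ (((k + 1 : ℕ) : ℝ) * h) < K ω) → x ^ (1 - ((k : ℝ) + 1) * h) < BB ω := by
      intro K BB k hBB hKB hnot
      push_neg at hnot
      have hc : (0 : ℝ) < x ^ (((k : ℝ) + 1) * h) := Real.rpow_pos_of_pos hx0 _
      have hcast : (((k + 1 : ℕ) : ℝ)) * h = ((k : ℝ) + 1) * h := by push_cast; ring
      rw [hcast] at hnot
      have hlt : x < x ^ (((k : ℝ) + 1) * h) * BB ω :=
        lt_of_lt_of_le hKB (mul_le_mul_of_nonneg_right hnot hBB)
      have : x ^ (1 - ((k : ℝ) + 1) * h) = x / x ^ (((k : ℝ) + 1) * h) := by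
        rw [Real.rpow_sub hx0, Real.rpow_one]
      rw [this, div_lt_iff₀ hc]
      linarith [mul_comm (x ^ (((k : ℝ) + 1) * h)) (BB ω)]
    have hmem : (i, j) ∈ SS := by
      rw [hSS_def, Finset.mem_product, Finset.mem_range, Finset.mem_range]
      exact ⟨Nat.lt_succ_of_le hiN, Nat.lt_succ_of_le hjN⟩
    refine Set.mem_biUnion hmem ?_
    · rw [hA_def]
      refine ⟨?_, ?_, ?_⟩
      · -- the K component
        by_cases hji : j ≤ i
        · by_cases hi0 : i = 0
          · left
            rw [hSG_def]
            simp only [max_eq_left hji, hi0]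
            have hj0 : j = 0 := Nat.le_zero.1 (hi0 ▸ hji)
            simp [hj0]
          · right
            have hPi : P i := Nat.findGreatest_of_ne_zero hi_def.symm hi0
            rw [hSG_def, hKK_def]
            simp only [max_eq_left hji, if_pos hji]
            exact hPi
        · right
          have hij' : i < j := lt_of_not_ge hji
          have hj0 : j ≠ 0 := by omega
          have hPj : P' j := Nat.findGreatest_of_ne_zero hj_def.symm hj0
          rw [hSG_def, hKK_def]
          simp only [max_eq_right hij'.le, if_neg hji]
          exact hPj
      · -- the B component
        by_cases hiNeq : i = N
        · left; simp [hU_def, hiNeq]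
        · right
          have hiN' : i < N := lt_of_le_of_ne hiN hiNeq
          have hnot : ¬ P (i + 1) :=
            Nat.findGreatest_is_greatest (Nat.lt_succ_self i) (Nat.succ_le_of_lt hiN')
          simp only [hU_def, if_neg hiNeq]
          exact hBnd M B i (hBnn ω) h1 hnot
      · -- the B' component
        by_cases hjNeq : j = N
        · left; simp [hU_def, hjNeq]
        · right
          have hjN' : j < N := lt_of_le_of_ne hjN hjNeq
          have hnot : ¬ P' (j + 1) :=
            Nat.findGreatest_is_greatest (Nat.lt_succ_self j) (Nat.succ_le_of_lt hjN')
          simp only [hU_def, if_neg hjNeq]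
          exact hBnd M' B' j (hB'nn ω) h2 hnot
  -- assemble
  have hbound : ∀ᶠ x : ℝ in atTop,
      (ℙ {ω | x < M ω * B ω ∧ x < M' ω * B' ω}).toReal / (ℙ {ω | x < B ω}).toReal
      ≤ ∑ p ∈ SS, (ℙ (A p x)).toReal / (ℙ {ω | x < B ω}).toReal := by
    filter_upwards [eventually_gt_atTop 1] with x hx
    have hμ : ℙ {ω | x < M ω * B ω ∧ x < M' ω * B' ω} ≤ ∑ p ∈ SS, ℙ (A p x) :=
      le_trans (measure_mono (hcover x hx)) (measure_biUnion_finset_le SS _)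
    have hsum_ne : (∑ p ∈ SS, ℙ (A p x)) ≠ ⊤ :=
      (ENNReal.sum_lt_top.2 fun p _ => measure_lt_top _ _).ne
    have htr : (ℙ {ω | x < M ω * B ω ∧ x < M' ω * B' ω}).toReal
        ≤ ∑ p ∈ SS, (ℙ (A p x)).toReal := by
      calc (ℙ {ω | x < M ω * B ω ∧ x < M' ω * B' ω}).toReal
          ≤ (∑ p ∈ SS, ℙ (A p x)).toReal := ENNReal.toReal_mono hsum_ne hμ
        _ = ∑ p ∈ SS, (ℙ (A p x)).toReal := ENNReal.toReal_sum fun p _ => measure_ne_top _ _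
    rw [← Finset.sum_div]
    exact (div_le_div_iff_of_pos_right (hBpos x)).2 htr
  have hzero : Tendsto
      (fun x => ∑ p ∈ SS, (ℙ (A p x)).toReal / (ℙ {ω | x < B ω}).toReal) atTop (𝓝 0) := by
    have := tendsto_finset_sum SS Tij
    simpa using this
  exact squeeze_zero'
    (Eventually.of_forall fun x => div_nonneg ENNReal.toReal_nonneg ENNReal.toReal_nonneg)
    hbound hzero
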